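/- The CRPS is a strictly proper scoring rule on P₁(ℝ): S̄(F,G) ≥ S̄(G,G) for all F, G ∈ P₁(ℝ), with equality if and only if F = G. -/

import Mathlib

open MeasureTheory ProbabilityTheory

/-- The Continuous Ranked Probability Score of the predictive distribution `F`
(identified with its c.d.f.) at the observation `y`. -/
noncomputable def crps (F : Measure ℝ) (y : ℝ) : ℝ :=
  ∫ z, ((if y ≤ z then (1 : ℝ) else 0) - cdf F z) ^ 2

/-- The expected CRPS `S̄(F,G) = E_{Y ∼ G}[S(F,Y)]`. -/
noncomputable def crpsBar (F G : Measure ℝ) : ℝ :=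
  ∫ y, crps F y ∂G

open Set Filter Topology ENNReal

/-- A Stieltjes function is determined by its values almost everywhere. -/
private lemma stieltjes_eq_of_ae_eq {f g : StieltjesFunction ℝ}
    (h : ∀ᵐ z, f z = g z) (x : ℝ) : f x = g x := by
  set A : Set ℝ := {z | f z = g z} with hA
  have hAc : volume Aᶜ = 0 := h
  have hne : (𝓝[A ∩ Ioi x] x).NeBot := by
    rw [← mem_closure_iff_nhdsWithin_neBot, Metric.mem_closure_iff]
    intro ε hε
    have hsub : ¬ (Ioo x (x + ε) ⊆ Aᶜ) := by
      intro hsub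
      have := measure_mono_null hsub hAc
      rw [Real.volume_Ioo] at this
      simp only [ENNReal.ofReal_eq_zero] at this
      linarith
    rw [Set.not_subset] at hsub
    obtain ⟨z, hz1, hz2⟩ := hsub
    simp only [Set.mem_compl_iff, not_not] at hz2
    refine ⟨z, ⟨hz2, hz1.1⟩, ?_⟩
    rw [Real.dist_eq, abs_lt]
    constructor <;> linarith [hz1.1, hz1.2]
  have hsub : A ∩ Ioi x ⊆ Ici x := fun z hz => Set.mem_Ici.2 (le_of_lt hz.2)
  have hf : Tendsto f (𝓝[A ∩ Ioi x] x) (𝓝 (f x)) :=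
    (f.right_continuous x).mono_left (nhdsWithin_mono x hsub)
  have hg : Tendsto g (𝓝[A ∩ Ioi x] x) (𝓝 (g x)) :=
    (g.right_continuous x).mono_left (nhdsWithin_mono x hsub)
  have hfg : Tendsto f (𝓝[A ∩ Ioi x] x) (𝓝 (g x)) := by
    refine hg.congr' ?_
    filter_upwards [self_mem_nhdsWithin] with z hz
    exact hz.1.symm
  exact tendsto_nhds_unique hf hfg

/-- The right tail integral of `1 - cdf` is finite for a measure with finite first moment. -/
private lemma tail_right (μ : Measure ℝ) [IsProbabilityMeasure μ] (hμ : Integrable id μ)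
    (a : ℝ) : ∫⁻ z in Ici a, ENNReal.ofReal (1 - cdf μ z) ≠ ⊤ := by
  have h1 : ∀ z : ℝ, ENNReal.ofReal (1 - cdf μ z) = μ (Ioi z) := by
    intro z
    rw [← Set.compl_Iic, prob_compl_eq_one_sub measurableSet_Iic, ← ofReal_cdf,
      ENNReal.ofReal_sub _ (cdf_nonneg μ z), ENNReal.ofReal_one]
  simp_rw [h1, fun z => (lintegral_indicator_one (μ := μ) (measurableSet_Ioi (a := z))).symm]
  have huncurry : (Function.uncurry fun z y => (Ioi z).indicator (1 : ℝ → ℝ≥0∞) y)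
      = {q : ℝ × ℝ | q.1 < q.2}.indicator (fun _ => (1 : ℝ≥0∞)) := by
    ext p
    simp [Function.uncurry, Set.indicator_apply, Set.mem_Ioi]
  have hswap : ∫⁻ z in Ici a, ∫⁻ y, (Ioi z).indicator (1 : ℝ → ℝ≥0∞) y ∂μ
      = ∫⁻ y, (∫⁻ z in Ici a, (Ioi z).indicator (1 : ℝ → ℝ≥0∞) y) ∂μ := by
    refine lintegral_lintegral_swap (μ := volume.restrict (Ici a)) (ν := μ)
      (f := fun z y => (Ioi z).indicator (1 : ℝ → ℝ≥0∞) y) ?_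
    rw [huncurry]
    exact (Measurable.indicator measurable_const
      (measurableSet_lt measurable_fst measurable_snd)).aemeasurable
  rw [hswap]
  have hinner : ∀ y : ℝ, ∫⁻ z in Ici a, (Ioi z).indicator (1 : ℝ → ℝ≥0∞) y
      = ENNReal.ofReal (y - a) := by
    intro y
    have : ∀ z : ℝ, (Ioi z).indicator (1 : ℝ → ℝ≥0∞) y
        = (Iio y).indicator (1 : ℝ → ℝ≥0∞) z := by
      intro z
      simp [Set.indicator_apply]
    simp_rw [this]
    rw [lintegral_indicator_one measurableSet_Iio,
      Measure.restrict_apply measurableSet_Iio]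
    rw [show Iio y ∩ Ici a = Ico a y by rw [Set.inter_comm]; exact Set.Ici_inter_Iio,
      Real.volume_Ico]
  simp_rw [hinner]
  have hbound : ∫⁻ y, ENNReal.ofReal (y - a) ∂μ
      ≤ ∫⁻ y, (ENNReal.ofReal |y| + ENNReal.ofReal |a|) ∂μ := by
    refine lintegral_mono fun y => ?_
    rw [← ENNReal.ofReal_add (abs_nonneg y) (abs_nonneg a)]
    exact ENNReal.ofReal_le_ofReal (by cases abs_cases y <;> cases abs_cases a <;> linarith)
  refine (lt_of_le_of_lt hbound ?_).ne
  rw [lintegral_add_right _ measurable_const, lintegral_const, measure_univ, mul_one]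
  refine ENNReal.add_lt_top.2 ⟨?_, ENNReal.ofReal_lt_top⟩
  have := hμ.hasFiniteIntegral
  simp only [HasFiniteIntegral, id] at this
  refine lt_of_eq_of_lt ?_ this
  congr 1
  ext y
  rw [← Real.enorm_eq_ofReal_abs]

/-- The left tail integral of `cdf` is finite for a measure with finite first moment. -/
private lemma tail_left (μ : Measure ℝ) [IsProbabilityMeasure μ] (hμ : Integrable id μ)
    (a : ℝ) : ∫⁻ z in Iic a, ENNReal.ofReal (cdf μ z) ≠ ⊤ := by
  simp_rw [ofReal_cdf, fun z => (lintegral_indicator_one (μ := μ) (measurableSet_Iic (a := z))).symm]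
  have huncurry : (Function.uncurry fun z y => (Iic z).indicator (1 : ℝ → ℝ≥0∞) y)
      = {q : ℝ × ℝ | q.2 ≤ q.1}.indicator (fun _ => (1 : ℝ≥0∞)) := by
    ext p
    simp [Function.uncurry, Set.indicator_apply, Set.mem_Iic]
  have hswap : ∫⁻ z in Iic a, ∫⁻ y, (Iic z).indicator (1 : ℝ → ℝ≥0∞) y ∂μ
      = ∫⁻ y, (∫⁻ z in Iic a, (Iic z).indicator (1 : ℝ → ℝ≥0∞) y) ∂μ := by
    refine lintegral_lintegral_swap (μ := volume.restrict (Iic a)) (ν := μ)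
      (f := fun z y => (Iic z).indicator (1 : ℝ → ℝ≥0∞) y) ?_
    rw [huncurry]
    exact (Measurable.indicator measurable_const
      (measurableSet_le measurable_snd measurable_fst)).aemeasurable
  rw [hswap]
  have hinner : ∀ y : ℝ, ∫⁻ z in Iic a, (Iic z).indicator (1 : ℝ → ℝ≥0∞) y
      = ENNReal.ofReal (a - y) := by
    intro y
    have : ∀ z : ℝ, (Iic z).indicator (1 : ℝ → ℝ≥0∞) y
        = (Ici y).indicator (1 : ℝ → ℝ≥0∞) z := by
      intro z
      simp [Set.indicator_apply]
    simp_rw [this]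
    rw [lintegral_indicator_one measurableSet_Ici,
      Measure.restrict_apply measurableSet_Ici]
    rw [Set.Ici_inter_Iic, Real.volume_Icc]
  simp_rw [hinner]
  have hbound : ∫⁻ y, ENNReal.ofReal (a - y) ∂μ
      ≤ ∫⁻ y, (ENNReal.ofReal |y| + ENNReal.ofReal |a|) ∂μ := by
    refine lintegral_mono fun y => ?_
    rw [← ENNReal.ofReal_add (abs_nonneg y) (abs_nonneg a)]
    exact ENNReal.ofReal_le_ofReal (by cases abs_cases y <;> cases abs_cases a <;> linarith)
  refine (lt_of_le_of_lt hbound ?_).ne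
  rw [lintegral_add_right _ measurable_const, lintegral_const, measure_univ, mul_one]
  refine ENNReal.add_lt_top.2 ⟨?_, ENNReal.ofReal_lt_top⟩
  have := hμ.hasFiniteIntegral
  simp only [HasFiniteIntegral, id] at this
  refine lt_of_eq_of_lt ?_ this
  congr 1
  ext y
  rw [← Real.enorm_eq_ofReal_abs]

/-- The expected CRPS as a Lebesgue integral of the cdf decomposition. -/
private lemma crpsBar_eq (F G : Measure ℝ) [IsProbabilityMeasure F] [IsProbabilityMeasure G]
    (hF : Integrable id F) (hG : Integrable id G) :
    crpsBar F G = (∫⁻ z, ENNReal.ofReal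
      ((cdf F z - cdf G z) ^ 2 + cdf G z * (1 - cdf G z))).toReal := by
  -- measurability of the real-valued integrand on the product
  have hmeas : Measurable fun p : ℝ × ℝ =>
      ((if p.1 ≤ p.2 then (1 : ℝ) else 0) - cdf F p.2) ^ 2 := by
    refine Measurable.pow_const (Measurable.sub ?_ ((monotone_cdf F).measurable.comp measurable_snd)) 2
    exact Measurable.ite (measurableSet_le measurable_fst measurable_snd)
      measurable_const measurable_const
  have hmeas1 : ∀ y : ℝ, Measurable fun z : ℝ =>
      ((if y ≤ z then (1 : ℝ) else 0) - cdf F z) ^ 2 :=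
    fun y => hmeas.comp (measurable_const.prodMk measurable_id)
  set J : ℝ → ℝ≥0∞ := fun y => ∫⁻ z, ENNReal.ofReal
    (((if y ≤ z then (1 : ℝ) else 0) - cdf F z) ^ 2) with hJ
  -- each inner integral is finite
  have hJfin : ∀ y : ℝ, J y ≠ ⊤ := by
    intro y
    show (∫⁻ z, ENNReal.ofReal (((if y ≤ z then (1 : ℝ) else 0) - cdf F z) ^ 2)) ≠ ⊤
    have hsplit := (lintegral_add_compl (μ := volume)
      (fun z => ENNReal.ofReal (((if y ≤ z then (1 : ℝ) else 0) - cdf F z) ^ 2))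
      (measurableSet_Iio (a := y))).symm
    rw [hsplit, Set.compl_Iio]
    refine ENNReal.add_ne_top.2 ⟨?_, ?_⟩
    · -- on `Iio y` the integrand is `(cdf F z)^2 ≤ cdf F z`
      have h1 : ∫⁻ z in Iio y, ENNReal.ofReal (((if y ≤ z then (1 : ℝ) else 0) - cdf F z) ^ 2)
          ≤ ∫⁻ z in Iic y, ENNReal.ofReal (cdf F z) := by
        refine le_trans (setLIntegral_mono' measurableSet_Iio fun z hz => ?_)
          (lintegral_mono_set Iio_subset_Iic_self)
        rw [if_neg (not_le.2 hz)]
        refine ENNReal.ofReal_le_ofReal ?_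
        have h0 := cdf_nonneg F z
        have h1 := cdf_le_one F z
        nlinarith
      exact (lt_of_le_of_lt h1 (lt_top_iff_ne_top.2 (tail_left F hF y))).ne
    · have h1 : ∫⁻ z in Ici y, ENNReal.ofReal (((if y ≤ z then (1 : ℝ) else 0) - cdf F z) ^ 2)
          ≤ ∫⁻ z in Ici y, ENNReal.ofReal (1 - cdf F z) := by
        refine setLIntegral_mono' measurableSet_Ici fun z hz => ?_
        rw [if_pos (Set.mem_Ici.1 hz)]
        refine ENNReal.ofReal_le_ofReal ?_
        have h0 := cdf_nonneg F z
        have h1 := cdf_le_one F z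
        nlinarith
      exact (lt_of_le_of_lt h1 (lt_top_iff_ne_top.2 (tail_right F hF y))).ne
  -- crps F y = (J y).toReal
  have hcrps : ∀ y : ℝ, crps F y = (J y).toReal := by
    intro y
    rw [crps, integral_eq_lintegral_of_nonneg_ae (ae_of_all _ fun z => sq_nonneg _)
      (hmeas1 y).aestronglyMeasurable]
  -- crpsBar F G = (double lintegral).toReal
  have hJmeas : Measurable J := by
    rw [hJ]
    exact Measurable.lintegral_prod_right (hmeas.ennreal_ofReal)
  have hbar : crpsBar F G = (∫⁻ y, J y ∂G).toReal := by
    rw [crpsBar]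
    simp_rw [hcrps]
    rw [← integral_toReal hJmeas.aemeasurable
      (ae_of_all _ fun y => lt_top_iff_ne_top.2 (hJfin y))]
  rw [hbar]
  congr 1
  -- swap the integrals
  rw [hJ]
  rw [lintegral_lintegral_swap (hmeas.ennreal_ofReal).aemeasurable]
  -- compute the inner integral over y
  refine lintegral_congr fun z => ?_
  rw [← lintegral_add_compl (μ := G)
    (fun y => ENNReal.ofReal (((if y ≤ z then (1 : ℝ) else 0) - cdf F z) ^ 2))
    (measurableSet_Iic (a := z))]
  have hIic : ∫⁻ y in Iic z, ENNReal.ofReal (((if y ≤ z then (1 : ℝ) else 0) - cdf F z) ^ 2) ∂G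
      = ENNReal.ofReal ((1 - cdf F z) ^ 2) * ENNReal.ofReal (cdf G z) := by
    rw [setLIntegral_congr_fun (f := fun y => ENNReal.ofReal (((if y ≤ z then (1 : ℝ) else 0) - cdf F z) ^ 2))
      (g := fun _ => ENNReal.ofReal ((1 - cdf F z) ^ 2)) measurableSet_Iic
      (fun y (hy : y ∈ Iic z) => by simp only [if_pos (Set.mem_Iic.1 hy)]), setLIntegral_const,
      ofReal_cdf]
  have hIoi : ∫⁻ y in (Iic z)ᶜ, ENNReal.ofReal (((if y ≤ z then (1 : ℝ) else 0) - cdf F z) ^ 2) ∂G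
      = ENNReal.ofReal ((cdf F z) ^ 2) * ENNReal.ofReal (1 - cdf G z) := by
    rw [Set.compl_Iic]
    rw [setLIntegral_congr_fun (f := fun y => ENNReal.ofReal (((if y ≤ z then (1 : ℝ) else 0) - cdf F z) ^ 2))
      (g := fun _ => ENNReal.ofReal ((cdf F z) ^ 2)) measurableSet_Ioi
      (fun y (hy : y ∈ Ioi z) => by simp only [if_neg (not_le.2 (Set.mem_Ioi.1 hy)), zero_sub, neg_sq]),
      setLIntegral_const]
    congr 1
    rw [← Set.compl_Iic, prob_compl_eq_one_sub measurableSet_Iic, ← ofReal_cdf,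
      ENNReal.ofReal_sub _ (cdf_nonneg G z), ENNReal.ofReal_one]
  rw [hIic, hIoi, ← ENNReal.ofReal_mul (sq_nonneg _), ← ENNReal.ofReal_mul (sq_nonneg _),
    ← ENNReal.ofReal_add (mul_nonneg (sq_nonneg _) (cdf_nonneg G z)) ?hnn]
  case hnn =>
    have h0 := cdf_nonneg F z
    have h1 := cdf_le_one F z
    have h2 := cdf_le_one G z
    nlinarith [sq_nonneg (cdf F z)]
  congr 1
  ring

/-- The CRPS is a strictly proper scoring rule on `P₁(ℝ)`. -/
theorem crps_strictly_proper (F G : Measure ℝ)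
    [IsProbabilityMeasure F] [IsProbabilityMeasure G]
    (hF : Integrable id F) (hG : Integrable id G) :
    crpsBar G G ≤ crpsBar F G ∧ (crpsBar F G = crpsBar G G ↔ F = G) := by
  set A : ℝ≥0∞ := ∫⁻ z, ENNReal.ofReal ((cdf F z - cdf G z) ^ 2) with hA
  set B : ℝ≥0∞ := ∫⁻ z, ENNReal.ofReal (cdf G z * (1 - cdf G z)) with hB
  have hGmeas : Measurable fun z => cdf G z := (monotone_cdf G).measurable
  have hFmeas : Measurable fun z => cdf F z := (monotone_cdf F).measurable
  -- bounds on cdfs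
  have hb : ∀ μ : Measure ℝ, ∀ z : ℝ, 0 ≤ cdf μ z ∧ cdf μ z ≤ 1 :=
    fun μ z => ⟨cdf_nonneg μ z, cdf_le_one μ z⟩
  -- finiteness of a dominating integral
  have hdom : ∫⁻ z, ENNReal.ofReal
      (2 * ((cdf F z + cdf G z) ⊓ ((1 - cdf F z) + (1 - cdf G z)))) ≠ ⊤ := by
    rw [← lintegral_add_compl (μ := volume) _ (measurableSet_Iic (a := (0:ℝ))), Set.compl_Iic]
    refine ENNReal.add_ne_top.2 ⟨?_, ?_⟩
    · have h1 : ∫⁻ z in Iic (0:ℝ), ENNReal.ofReal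
          (2 * ((cdf F z + cdf G z) ⊓ ((1 - cdf F z) + (1 - cdf G z))))
          ≤ ∫⁻ z in Iic (0:ℝ), (ENNReal.ofReal (2 * cdf F z) + ENNReal.ofReal (2 * cdf G z)) := by
        refine setLIntegral_mono' measurableSet_Iic fun z _ => ?_
        rw [← ENNReal.ofReal_add (by linarith [(hb F z).1]) (by linarith [(hb G z).1])]
        refine ENNReal.ofReal_le_ofReal ?_
        have := inf_le_left (a := cdf F z + cdf G z) (b := (1 - cdf F z) + (1 - cdf G z))
        linarith
      refine (lt_of_le_of_lt h1 ?_).ne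
      rw [lintegral_add_left ((hFmeas.const_mul 2).ennreal_ofReal)]
      refine ENNReal.add_lt_top.2 ⟨?_, ?_⟩
      · simp_rw [ENNReal.ofReal_mul (by norm_num : (0:ℝ) ≤ 2)]
        rw [lintegral_const_mul _ hFmeas.ennreal_ofReal]
        exact ENNReal.mul_lt_top ENNReal.ofReal_lt_top
          (lt_top_iff_ne_top.2 (tail_left F hF 0))
      · simp_rw [ENNReal.ofReal_mul (by norm_num : (0:ℝ) ≤ 2)]
        rw [lintegral_const_mul _ hGmeas.ennreal_ofReal]
        exact ENNReal.mul_lt_top ENNReal.ofReal_lt_top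
          (lt_top_iff_ne_top.2 (tail_left G hG 0))
    · have h1 : ∫⁻ z in Ioi (0:ℝ), ENNReal.ofReal
          (2 * ((cdf F z + cdf G z) ⊓ ((1 - cdf F z) + (1 - cdf G z))))
          ≤ ∫⁻ z in Ici (0:ℝ), (ENNReal.ofReal (2 * (1 - cdf F z))
            + ENNReal.ofReal (2 * (1 - cdf G z))) := by
        refine le_trans (setLIntegral_mono' measurableSet_Ioi fun z _ => ?_)
          (lintegral_mono_set Ioi_subset_Ici_self)
        rw [← ENNReal.ofReal_add (by linarith [(hb F z).2]) (by linarith [(hb G z).2])]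
        refine ENNReal.ofReal_le_ofReal ?_
        have := inf_le_right (a := cdf F z + cdf G z) (b := (1 - cdf F z) + (1 - cdf G z))
        linarith
      refine (lt_of_le_of_lt h1 ?_).ne
      rw [lintegral_add_left (f := fun z => ENNReal.ofReal (2 * (1 - cdf F z))) (((measurable_const.sub hFmeas).const_mul 2).ennreal_ofReal)]
      refine ENNReal.add_lt_top.2 ⟨?_, ?_⟩
      · simp_rw [ENNReal.ofReal_mul (by norm_num : (0:ℝ) ≤ 2)]
        rw [lintegral_const_mul (f := fun z => ENNReal.ofReal (1 - cdf F z)) _ (measurable_const.sub hFmeas).ennreal_ofReal]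
        exact ENNReal.mul_lt_top ENNReal.ofReal_lt_top
          (lt_top_iff_ne_top.2 (tail_right F hF 0))
      · simp_rw [ENNReal.ofReal_mul (by norm_num : (0:ℝ) ≤ 2)]
        rw [lintegral_const_mul (f := fun z => ENNReal.ofReal (1 - cdf G z)) _ (measurable_const.sub hGmeas).ennreal_ofReal]
        exact ENNReal.mul_lt_top ENNReal.ofReal_lt_top
          (lt_top_iff_ne_top.2 (tail_right G hG 0))
  -- pointwise domination
  have hptA : ∀ z : ℝ, ENNReal.ofReal ((cdf F z - cdf G z) ^ 2 + cdf G z * (1 - cdf G z))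
      ≤ ENNReal.ofReal (2 * ((cdf F z + cdf G z) ⊓ ((1 - cdf F z) + (1 - cdf G z)))) := by
    intro z
    refine ENNReal.ofReal_le_ofReal ?_
    obtain ⟨hF0, hF1⟩ := hb F z
    obtain ⟨hG0, hG1⟩ := hb G z
    rcases le_total (cdf F z + cdf G z) ((1 - cdf F z) + (1 - cdf G z)) with hle | hle
    · rw [inf_eq_left.2 hle]
      nlinarith
    · rw [inf_eq_right.2 hle]
      nlinarith
  have hfinFG : ∫⁻ z, ENNReal.ofReal
      ((cdf F z - cdf G z) ^ 2 + cdf G z * (1 - cdf G z)) ≠ ⊤ :=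
    ((lintegral_mono hptA).trans_lt (lt_top_iff_ne_top.2 hdom)).ne
  -- split into A + B
  have hsplitFG : ∫⁻ z, ENNReal.ofReal ((cdf F z - cdf G z) ^ 2 + cdf G z * (1 - cdf G z))
      = A + B := by
    rw [hA, hB, ← lintegral_add_left (f := fun z => ENNReal.ofReal ((cdf F z - cdf G z) ^ 2)) (((hFmeas.sub hGmeas).pow_const 2).ennreal_ofReal)]
    refine lintegral_congr fun z => ?_
    rw [← ENNReal.ofReal_add (sq_nonneg _) (by nlinarith [(hb G z).1, (hb G z).2])]
  have hABfin : A + B ≠ ⊤ := hsplitFG ▸ hfinFG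
  have hAfin : A ≠ ⊤ := fun h => hABfin (by simp [h])
  have hBfin : B ≠ ⊤ := fun h => hABfin (by simp [h])
  have hFG : crpsBar F G = (A + B).toReal := by
    rw [crpsBar_eq F G hF hG, hsplitFG]
  have hGG : crpsBar G G = B.toReal := by
    rw [crpsBar_eq G G hG hG]
    congr 1
    refine lintegral_congr fun z => ?_
    rw [sub_self, zero_pow (by norm_num), zero_add]
  constructor
  · rw [hFG, hGG]
    exact ENNReal.toReal_le_toReal hBfin hABfin |>.2 le_add_self
  · constructor
    · intro heq
      rw [hFG, hGG] at heq
      have hAB : A + B = B := (ENNReal.toReal_eq_toReal_iff' hABfin hBfin).1 heq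
      have hA0 : A = 0 := by
        have h1 : A + B - B = B - B := by rw [hAB]
        rwa [ENNReal.add_sub_cancel_right hBfin, tsub_self] at h1
      -- deduce cdf F = cdf G a.e.
      rw [hA, lintegral_eq_zero_iff (f := fun z => ENNReal.ofReal ((cdf F z - cdf G z) ^ 2)) (((hFmeas.sub hGmeas).pow_const 2).ennreal_ofReal)] at hA0
      have hae : ∀ᵐ z, cdf F z = cdf G z := by
        filter_upwards [hA0] with z hz
        simp only [Pi.zero_apply, ENNReal.ofReal_eq_zero] at hz
        have : (cdf F z - cdf G z) ^ 2 = 0 := le_antisymm hz (sq_nonneg _)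
        have := pow_eq_zero_iff (n := 2) (by norm_num) |>.1 this
        linarith [sub_eq_zero.1 this]
      refine Measure.eq_of_cdf F G ?_
      ext x
      exact stieltjes_eq_of_ae_eq hae x
    · rintro rfl
      rfl
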